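/- Let X be a one-sided shift space and T_X its hom tree-shift. Then T_X is uniform CPC-strongly irreducible (CPC USI) if and only if T_X is uniform CPC-block gluing (CPC UBG). -/

import Mathlib

namespace TreeShiftPaper

/-- Words over the alphabet `Σ = {0, …, k-1}`: nodes of the `k`-tree. -/
abbrev Word (k : ℕ) := List (Fin k)

variable {k : ℕ} {A : Type*}

/-- A set of words is prefix-closed if it contains every prefix of each of its elements. -/
def PrefixClosed (S : Set (Word k)) : Prop :=
  ∀ w ∈ S, ∀ v : Word k, v <+: w → v ∈ S

/-- The pattern with support `S` and labels `u` appears in the labeled tree `t`. -/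
def PatternAppears (t : Word k → A) (S : Set (Word k)) (u : Word k → A) : Prop :=
  ∃ s : Word k, ∀ w ∈ S, t (s ++ w) = u w

/-- The set of labeled trees avoiding every pattern of the forbidden family `F`. -/
def treeShiftOf (F : Set ((Set (Word k)) × (Word k → A))) : Set (Word k → A) :=
  {t | ∀ p ∈ F, ¬ PatternAppears t p.1 p.2}

/-- `T` is a tree-shift: it is defined by some forbidden set of patterns
(each with finite prefix-closed support). -/
def IsTreeShift (T : Set (Word k → A)) : Prop :=
  ∃ F : Set ((Set (Word k)) × (Word k → A)),
    (∀ p ∈ F, p.1.Finite ∧ PrefixClosed p.1) ∧ T = treeShiftOf F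

/-- `T` is a tree-shift of finite type: the forbidden set can be chosen finite. -/
def IsTreeSFT (T : Set (Word k → A)) : Prop :=
  ∃ F : Set ((Set (Word k)) × (Word k → A)),
    F.Finite ∧ (∀ p ∈ F, p.1.Finite ∧ PrefixClosed p.1) ∧ T = treeShiftOf F

/-- The finite word `w` occurs in the one-sided sequence `x` at position `i`. -/
def OccursAt (x : ℕ → A) (i : ℕ) (w : List A) : Prop :=
  ∀ j : Fin w.length, x (i + (j : ℕ)) = w.get j

/-- The one-sided shift space defined by the forbidden set of words `F`. -/
def shiftOf (F : Set (List A)) : Set (ℕ → A) :=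
  {x | ∀ w ∈ F, ∀ i : ℕ, ¬ OccursAt x i w}

/-- `X` is a one-sided shift space. -/
def IsShift (X : Set (ℕ → A)) : Prop := ∃ F : Set (List A), X = shiftOf F

/-- `X` is a one-sided shift of finite type. -/
def IsSFT (X : Set (ℕ → A)) : Prop :=
  ∃ F : Set (List A), F.Finite ∧ X = shiftOf F

/-- A chain: an infinite path in the tree starting at the root. -/
def IsChain (c : ℕ → Word k) : Prop :=
  c 0 = [] ∧ ∀ n : ℕ, ∃ i : Fin k, c (n + 1) = c n ++ [i]

/-- The hom tree-shift associated with a one-sided shift space `X`: labeled trees whose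
projection along every chain lies in `X`. -/
def homTree (k : ℕ) (X : Set (ℕ → A)) : Set (Word k → A) :=
  {t | ∀ c : ℕ → Word k, IsChain c → (fun n => t (c n)) ∈ X}

/-- `Y` is a sofic one-sided shift: image of an SFT under a sliding block code induced
by an `n`-block map. -/
def IsSofic (Y : Set (ℕ → A)) : Prop :=
  ∃ (B : Type) (_ : Fintype B) (X : Set (ℕ → B)) (n : ℕ) (f : (ℕ → B) → A),
    IsSFT X ∧ (∀ u v : ℕ → B, (∀ j < n, u j = v j) → f u = f v) ∧
    (fun x : ℕ → B => fun i => f (fun j => x (i + j))) '' X = Y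

/-- `T` is a sofic tree-shift: image of a tree-SFT under the map induced by an
`n`-block map. -/
def IsSoficTree (T : Set (Word k → A)) : Prop :=
  ∃ (B : Type) (_ : Fintype B) (T' : Set (Word k → B)) (n : ℕ) (g : (Word k → B) → A),
    IsTreeSFT T' ∧
    (∀ u v : Word k → B, (∀ w : Word k, w.length ≤ n → u w = v w) → g u = g v) ∧
    (fun t : Word k → B => fun w => g (fun z => t (w ++ z))) '' T' = T

/-- The Markov tree-shift determined by `k` binary `d × d` transition matrices. -/
def markovTree (k d : ℕ) (M : Fin k → Matrix (Fin d) (Fin d) Bool) :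
    Set (Word k → Fin d) :=
  {t | ∀ w : Word k, ∀ i : Fin k, M i (t w) (t (w ++ [i])) = true}

/-- The one-sided Markov (vertex) shift determined by a binary `d × d` matrix. -/
def markovShift (d : ℕ) (M : Matrix (Fin d) (Fin d) Bool) : Set (ℕ → Fin d) :=
  {x | ∀ i : ℕ, M (x i) (x (i + 1)) = true}

/-- The pattern with support `S` and labels `u` is admissible in `T`. -/
def AdmissiblePattern (T : Set (Word k → A)) (S : Set (Word k)) (u : Word k → A) : Prop :=
  ∃ t ∈ T, ∃ s : Word k, ∀ w ∈ S, t (s ++ w) = u w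

/-- The `n`-block `u` (a labeling of `Δ_n`) is admissible in `T`. -/
def AdmissibleBlock (T : Set (Word k → A)) (n : ℕ) (u : Word k → A) : Prop :=
  ∃ t ∈ T, ∃ s : Word k, ∀ w : Word k, w.length ≤ n → t (s ++ w) = u w

/-- Word distance on the `k`-tree:
`d(x,y) = |x| + |y| - 2 · max{|w| : w` a common prefix of `x` and `y}`. -/
noncomputable def wordDist (x y : Word k) : ℕ :=
  x.length + y.length - 2 * sSup {m : ℕ | ∃ w : Word k, w <+: x ∧ w <+: y ∧ w.length = m}

/-- The boundary `∂S = {w ∈ S : wΣ ∩ S = ∅}` of a support `S`. -/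
def boundary (S : Set (Word k)) : Set (Word k) :=
  {w | w ∈ S ∧ ∀ i : Fin k, w ++ [i] ∉ S}

/-- A complete prefix code: a finite prefix set such that every word of length at least
`max_{z ∈ P} |z|` has a prefix in `P`. -/
def IsCPC (P : Set (Word k)) : Prop :=
  P.Finite ∧ (∀ x ∈ P, ∀ y ∈ P, x <+: y → x = y) ∧
  ∀ w : Word k, (∀ z ∈ P, z.length ≤ w.length) → ∃ x ∈ P, x <+: w

/-- Strong irreducibility with gap `N`. -/
def SIGap (T : Set (Word k → A)) (N : ℕ) : Prop :=
  ∀ (Su Sv : Set (Word k)) (u v : Word k → A),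
    Su.Finite → PrefixClosed Su → Sv.Finite → PrefixClosed Sv →
    AdmissiblePattern T Su u → AdmissiblePattern T Sv v →
    ∀ w : Word k, (∀ h ∈ Su, N ≤ wordDist w h) →
      ∃ t ∈ T, (∀ z ∈ Su, t z = u z) ∧ ∀ z ∈ Sv, t (w ++ z) = v z

/-- `T` is strongly irreducible (SI). -/
def SI (T : Set (Word k → A)) : Prop := ∃ N : ℕ, SIGap T N

/-- `T` is block gluing (BG). -/
def BG (T : Set (Word k → A)) : Prop :=
  ∃ N : ℕ, ∀ (n m : ℕ) (u v : Word k → A),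
    AdmissibleBlock T n u → AdmissibleBlock T m v →
    ∀ w : Word k, N + n ≤ w.length →
      ∃ t ∈ T, (∀ z : Word k, z.length ≤ n → t z = u z) ∧
        ∀ z : Word k, z.length ≤ m → t (w ++ z) = v z

/-- `T` is topologically mixing (TM). -/
def TM (T : Set (Word k → A)) : Prop :=
  ∀ H₁ H₂ : Set (Word k), H₁.Finite → H₂.Finite →
    ∃ N : ℕ, ∀ t₁ ∈ T, ∀ t₂ ∈ T, ∀ w : Word k, (∀ h ∈ H₁, N ≤ wordDist w h) →
      ∃ t ∈ T, (∀ z ∈ H₁, t z = t₁ z) ∧ ∀ z ∈ H₂, t (w ++ z) = t₂ z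

/-- `T` is irreducible (IR). -/
def IR (T : Set (Word k → A)) : Prop :=
  ∀ (n m : ℕ) (u v : Word k → A),
    AdmissibleBlock T n u → AdmissibleBlock T m v →
    ∃ w : Word k, n < w.length ∧
      ∃ t ∈ T, (∀ z : Word k, z.length ≤ n → t z = u z) ∧
        ∀ z : Word k, z.length ≤ m → t (w ++ z) = v z

/-- `T` is CPC-strongly irreducible via the prefix set `P`. -/
def CPCSIWith (T : Set (Word k → A)) (P : Set (Word k)) : Prop :=
  ∀ (Su Sv : Set (Word k)) (u v : Word k → A),
    Su.Finite → PrefixClosed Su → Sv.Finite → PrefixClosed Sv →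
    AdmissiblePattern T Su u → AdmissiblePattern T Sv v →
    ∃ t ∈ T, (∀ z ∈ Su, t z = u z) ∧
      ∀ w ∈ boundary Su, ∀ z ∈ P, ∀ y ∈ Sv, t (w ++ z ++ y) = v y

/-- `T` is CPC-strongly irreducible (CPC SI). -/
def CPCSI (T : Set (Word k → A)) : Prop := ∃ P : Set (Word k), IsCPC P ∧ CPCSIWith T P

/-- `T` is uniform CPC-strongly irreducible (CPC USI): CPC SI with `P = Σ^N`. -/
def CPCUSI (T : Set (Word k → A)) : Prop :=
  ∃ N : ℕ, CPCSIWith T {z : Word k | z.length = N}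

/-- `T` is CPC-block gluing via the prefix set `P`. -/
def CPCBGWith (T : Set (Word k → A)) (P : Set (Word k)) : Prop :=
  ∀ (n m : ℕ) (u v : Word k → A),
    AdmissibleBlock T n u → AdmissibleBlock T m v →
    ∃ t ∈ T, (∀ z : Word k, z.length ≤ n → t z = u z) ∧
      ∀ w : Word k, w.length = n → ∀ z ∈ P, ∀ y : Word k, y.length ≤ m →
        t (w ++ z ++ y) = v y

/-- `T` is CPC-block gluing (CPC BG). -/
def CPCBG (T : Set (Word k → A)) : Prop := ∃ P : Set (Word k), IsCPC P ∧ CPCBGWith T P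

/-- `T` is uniform CPC-block gluing (CPC UBG): CPC BG with `P = Σ^N`. -/
def CPCUBG (T : Set (Word k → A)) : Prop :=
  ∃ N : ℕ, CPCBGWith T {z : Word k | z.length = N}

/-- `T` is CPC-irreducible (CPC IR). -/
def CPCIR (T : Set (Word k → A)) : Prop :=
  ∀ (n m : ℕ) (u v : Word k → A),
    AdmissibleBlock T n u → AdmissibleBlock T m v →
    ∃ P : Set (Word k), IsCPC P ∧ (∀ z ∈ P, n + 1 ≤ z.length) ∧
      ∃ t ∈ T, (∀ z : Word k, z.length ≤ n → t z = u z) ∧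
        ∀ w ∈ P, ∀ y : Word k, y.length ≤ m → t (w ++ y) = v y

/-- The finite word `u` is admissible in the one-sided shift space `X`. -/
def WordAdmissible (X : Set (ℕ → A)) (u : List A) : Prop :=
  ∃ x ∈ X, ∃ i : ℕ, OccursAt x i u

/-- The one-sided shift space `X` is topologically mixing. -/
def MixingShift (X : Set (ℕ → A)) : Prop :=
  ∀ u v : List A, WordAdmissible X u → WordAdmissible X v →
    ∃ N : ℕ, ∀ n ≥ N, ∃ x ∈ X, OccursAt x 0 u ∧ OccursAt x (u.length + n) v

/-- The one-sided shift space `X` is transitive (irreducible). -/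
def TransitiveShift (X : Set (ℕ → A)) : Prop :=
  ∀ u v : List A, WordAdmissible X u → WordAdmissible X v →
    ∃ x ∈ X, ∃ n : ℕ, u.length ≤ n ∧ OccursAt x 0 u ∧ OccursAt x n v

end TreeShiftPaper

namespace TreeShiftPaper


section AuxLemmas

variable {k : ℕ} {A : Type*}

lemma chain_length {c : ℕ → Word k} (hc : IsChain c) : ∀ n, (c n).length = n := by
  intro n; induction n with
  | zero => simp [hc.1]
  | succ n ih => obtain ⟨i, hi⟩ := hc.2 n; simp [hi, ih]

lemma chain_prefix {c : ℕ → Word k} (hc : IsChain c) {a b : ℕ} (h : a ≤ b) :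
    c a <+: c b := by
  induction b, h using Nat.le_induction with
  | base => exact List.prefix_refl _
  | succ b hab ih =>
    obtain ⟨i, hi⟩ := hc.2 b
    rw [hi]
    exact ih.trans (List.prefix_append _ _)

lemma prefix_prefix_le {w w' z : Word k} (h1 : w <+: z) (h2 : w' <+: z)
    (h : w.length ≤ w'.length) : w <+: w' := by
  rw [List.prefix_iff_eq_take] at h1 h2
  rw [h1, h2]
  exact List.take_prefix_take_left h

lemma boundary_prefix_eq {Su : Set (Word k)} (hSu : PrefixClosed Su)
    {w z : Word k} (hw : w ∈ boundary Su) (hz : z ∈ Su) (h : w <+: z) : w = z := by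
  obtain ⟨d, rfl⟩ := h
  cases d with
  | nil => simp
  | cons i d' =>
    exact absurd (hSu _ hz (w ++ [i]) ⟨d', by simp⟩) (hw.2 i)

lemma boundary_unique {Su : Set (Word k)} (hSu : PrefixClosed Su)
    {w w' z : Word k} (hw : w ∈ boundary Su) (hw' : w' ∈ boundary Su)
    (h1 : w <+: z) (h2 : w' <+: z) : w = w' := by
  rcases le_total w.length w'.length with h | h
  · exact boundary_prefix_eq hSu hw hw'.1 (prefix_prefix_le h1 h2 h)
  · exact (boundary_prefix_eq hSu hw' hw.1 (prefix_prefix_le h2 h1 h)).symm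

lemma mem_shiftOf_shift {F : Set (List A)} {x : ℕ → A} (hx : x ∈ shiftOf F) (j : ℕ) :
    (fun n => x (n + j)) ∈ shiftOf F := by
  intro w hw i hocc
  refine hx w hw (i + j) (fun jj => ?_)
  have := hocc jj
  rw [add_right_comm]
  exact this

lemma homTree_chain_shift {X : Set (ℕ → A)} (hX : IsShift X) {t : Word k → A}
    (ht : t ∈ homTree k X) (s : Word k) {c : ℕ → Word k} (hc : IsChain c) :
    (fun n => t (s ++ c n)) ∈ X := by
  obtain ⟨F, rfl⟩ := hX
  have hchain : IsChain (fun n => s.take n ++ c (n - s.length)) := by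
    constructor
    · simp [hc.1]
    · intro n
      rcases lt_or_ge n s.length with h | h
      · refine ⟨s.get ⟨n, h⟩, ?_⟩
        have h0 : n + 1 - s.length = 0 := by omega
        have h0' : n - s.length = 0 := by omega
        simp only [h0, h0', hc.1, List.append_nil]
        rw [← List.take_concat_get' s n h]
        simp
      · obtain ⟨i, hi⟩ := hc.2 (n - s.length)
        refine ⟨i, ?_⟩
        have e1 : n + 1 - s.length = (n - s.length) + 1 := by omega
        simp only [e1, hi, List.take_of_length_le h,
          List.take_of_length_le (h.trans n.le_succ), List.append_assoc]
  have hx := ht _ hchain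
  have h2 := mem_shiftOf_shift hx s.length
  have heq : (fun n => t (s ++ c n)) =
      fun n => t (s.take (n + s.length) ++ c (n + s.length - s.length)) := by
    funext n
    rw [List.take_of_length_le (Nat.le_add_left s.length n), Nat.add_sub_cancel]
  rw [heq]
  exact h2

end AuxLemmas

/-- For a hom tree-shift `T_X`: uniform CPC-strong irreducibility is equivalent to
uniform CPC-block gluing. -/
theorem stmt9 {k : ℕ} (hk : 2 ≤ k) {A : Type*} [Fintype A] (X : Set (ℕ → A))
    (hX : IsShift X) : CPCUSI (homTree k X) ↔ CPCUBG (homTree k X) := by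
  constructor
  · rintro ⟨N, hN⟩
    refine ⟨N, fun n m u v hu hv => ?_⟩
    obtain ⟨t, htT, htu, htv⟩ := hN {z : Word k | z.length ≤ n} {z : Word k | z.length ≤ m}
      u v (List.finite_length_le _ n) (fun w hw v' hv' => le_trans hv'.length_le hw)
      (List.finite_length_le _ m) (fun w hw v' hv' => le_trans hv'.length_le hw) hu hv
    refine ⟨t, htT, fun z hz => htu z hz, fun w hw z hz y hy => ?_⟩
    refine htv w ⟨le_of_eq hw, fun i => ?_⟩ z hz y hy
    simp only [Set.mem_setOf_eq, List.length_append, List.length_cons, List.length_nil]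
    omega
  · rintro ⟨N, hN⟩
    refine ⟨N, fun Su Sv u v hSuf hSupc hSvf hSvpc hu hv => ?_⟩
    obtain ⟨tu, htuT, su, htu⟩ := hu
    obtain ⟨tv, htvT, sv, htv⟩ := hv
    obtain ⟨m, hm⟩ : ∃ m : ℕ, ∀ y ∈ Sv, y.length ≤ m := by
      obtain ⟨m, hm⟩ := (hSvf.image List.length).bddAbove
      exact ⟨m, fun y hy => hm (Set.mem_image_of_mem _ hy)⟩
    have key : ∀ w : Word k, ∃ τ ∈ homTree k X,
        (∀ z : Word k, z.length ≤ su.length + w.length → τ z = tu z) ∧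
        ∀ w' : Word k, w'.length = su.length + w.length →
          ∀ z ∈ {z : Word k | z.length = N}, ∀ y : Word k, y.length ≤ m →
            τ (w' ++ z ++ y) = tv (sv ++ y) := by
      intro w
      exact hN (su.length + w.length) m (fun z => tu z) (fun y => tv (sv ++ y))
        ⟨tu, htuT, [], fun z _ => by simp⟩ ⟨tv, htvT, sv, fun y _ => rfl⟩
    choose τ hτT hτu hτv using key
    classical
    obtain ⟨t, tpos, tneg⟩ : ∃ t : Word k → A,
        (∀ z : Word k, ∀ w ∈ boundary Su, w <+: z → t z = τ w (su ++ z)) ∧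
        (∀ z : Word k, (¬ ∃ w ∈ boundary Su, w <+: z) → t z = tu (su ++ z)) := by
      refine ⟨fun z => if h : ∃ w ∈ boundary Su, w <+: z then τ h.choose (su ++ z)
        else tu (su ++ z), ?_, fun z h => dif_neg h⟩
      intro z w hwB hwp
      have h : ∃ w ∈ boundary Su, w <+: z := ⟨w, hwB, hwp⟩
      show (if h : ∃ w ∈ boundary Su, w <+: z then τ h.choose (su ++ z)
        else tu (su ++ z)) = τ w (su ++ z)
      rw [dif_pos h]
      obtain ⟨h1, h2⟩ := h.choose_spec
      rw [boundary_unique hSupc h1 hwB h2 hwp]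
    refine ⟨t, ?_, ?_, ?_⟩
    · intro c hc
      by_cases hex : ∃ n : ℕ, ∃ w ∈ boundary Su, w <+: c n
      · obtain ⟨n0, w, hwB, hwp⟩ := hex
        have hlen := chain_length hc
        have hcw : c w.length = w :=
          (prefix_prefix_le (chain_prefix hc (by rw [← hlen n0]; exact hwp.length_le)) hwp
            (le_of_eq (hlen _))).eq_of_length (hlen _)
        have hval : ∀ n : ℕ, t (c n) = τ w (su ++ c n) := by
          intro n
          rcases lt_or_ge n w.length with h | h
          · rw [tneg]
            · refine (hτu w _ ?_).symm
              rw [List.length_append, hlen]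
              omega
            · rintro ⟨w'', hB, hp⟩
              have hp2 : w'' <+: w := hp.trans (by rw [← hcw]; exact chain_prefix hc h.le)
              have heq := boundary_prefix_eq hSupc hB hwB.1 hp2
              have hle : w''.length ≤ n := by rw [← hlen n]; exact hp.length_le
              rw [heq] at hle
              omega
          · exact tpos (c n) w hwB (by rw [← hcw]; exact chain_prefix hc h)
        have : (fun n => t (c n)) = fun n => τ w (su ++ c n) := funext hval
        rw [this]
        exact homTree_chain_shift hX (hτT w) su hc
      · have : (fun n => t (c n)) = fun n => tu (su ++ c n) :=
          funext fun n => tneg (c n) (fun h => hex ⟨n, h⟩)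
        rw [this]
        exact homTree_chain_shift hX htuT su hc
    · intro z hz
      by_cases h : ∃ w ∈ boundary Su, w <+: z
      · obtain ⟨w, hwB, hwp⟩ := h
        have heq := boundary_prefix_eq hSupc hwB hz hwp
        subst heq
        rw [tpos w w hwB (List.prefix_refl w),
          hτu w _ (le_of_eq List.length_append), htu w hz]
      · rw [tneg z h]
        exact htu z hz
    · intro w hwB z hz y hy
      have hpre : w <+: w ++ z ++ y := ⟨z ++ y, (List.append_assoc w z y).symm⟩
      rw [tpos _ w hwB hpre]
      have e : su ++ (w ++ z ++ y) = (su ++ w) ++ z ++ y := by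
        simp [List.append_assoc]
      rw [e, hτv w (su ++ w) List.length_append z hz y (hm y hy)]
      exact htv y hy


end TreeShiftPaper
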